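/- For every gauge function f there is an increasing function g ∈ ω^ω such that the Yorioka ideal I_g is contained in N^f = {A ⊆ 2^ω : ℋ^f(A) = 0}. -/

import Mathlib

open MeasureTheory Set
open scoped ENNReal

/-- The Cantor space `2^ω = ℕ → Bool` carries the metric
`d(x,y) = 2^{-min{n : x n ≠ y n}}` (and `d(x,x) = 0`). -/
noncomputable local instance cantorMetric : MetricSpace (ℕ → Bool) := PiNat.metricSpace

/-- A gauge function: a nondecreasing function `f : [0,∞) → [0,∞)` with `f 0 = 0` and
`lim_{x → 0⁺} f x = 0`. -/
structure IsGauge (f : ℝ → ℝ) : Prop where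
  nonneg : ∀ x : ℝ, 0 ≤ x → 0 ≤ f x
  zero : f 0 = 0
  mono : MonotoneOn f (Ici 0)
  tendsto_zero : Filter.Tendsto f (nhdsWithin 0 (Ioi 0)) (nhds 0)

/-- The value `f(diam)` of a gauge function `f` on an extended-real diameter
(infinite diameters are sent to `∞`). -/
noncomputable def gaugeFn (f : ℝ → ℝ) : ℝ≥0∞ → ℝ≥0∞ := fun d =>
  if d = ∞ then ∞ else ENNReal.ofReal (f d.toReal)

/-- The Hausdorff (outer) measure `ℋ^f` with gauge function `f`. -/
noncomputable def gaugeMeasure {X : Type*} [EMetricSpace X] (f : ℝ → ℝ) : OuterMeasure X :=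
  OuterMeasure.mkMetric (gaugeFn f)

/-- `s` is an initial segment of `x : 2^ω`. -/
def InitSeg (s : List Bool) (x : ℕ → Bool) : Prop :=
  ∀ i : ℕ, (hi : i < s.length) → s.get ⟨i, hi⟩ = x i

/-- `[σ]_∞` : the set of `x ∈ 2^ω` having `σ n` as an initial segment for infinitely
many `n`. -/
def limsupCyl (σ : ℕ → List Bool) : Set (ℕ → Bool) :=
  {x | ∃ᶠ n in Filter.atTop, InitSeg (σ n) x}

/-- The ideal `J_g = {A ⊆ 2^ω : ∃ σ, ht σ = g and A ⊆ [σ]_∞}`. -/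
def Jg (g : ℕ → ℕ) : Set (Set (ℕ → Bool)) :=
  {A | ∃ σ : ℕ → List Bool, (∀ n, (σ n).length = g n) ∧ A ⊆ limsupCyl σ}

/-- `f ≪ g` iff for every `k`, `f (n^k) ≤ g n` for all but finitely many `n`. -/
def FastBelow (f g : ℕ → ℕ) : Prop := ∀ k : ℕ, ∀ᶠ n in Filter.atTop, f (n ^ k) ≤ g n

/-- The Yorioka ideal `I_f = ⋃_{g ≫ f} J_g`. -/
def Yorioka (f : ℕ → ℕ) : Set (Set (ℕ → Bool)) :=
  {A | ∃ g : ℕ → ℕ, FastBelow f g ∧ A ∈ Jg g}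


namespace Stmt12Aux

open Filter ENNReal

lemma ofReal_half_pow (k : ℕ) : ENNReal.ofReal ((1/2 : ℝ)^k) = (2⁻¹ : ℝ≥0∞)^k := by
  rw [ENNReal.ofReal_pow (by norm_num)]
  congr 1
  rw [ENNReal.ofReal_div_of_pos (by norm_num), ENNReal.ofReal_one, ENNReal.ofReal_ofNat, one_div]

lemma diam_cyl (s : List Bool) :
    EMetric.diam {x : ℕ → Bool | InitSeg s x} ≤ ENNReal.ofReal ((1/2 : ℝ) ^ s.length) := by
  apply EMetric.diam_le
  intro x hx y hy
  rw [edist_dist]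
  apply ENNReal.ofReal_le_ofReal
  have hmem : y ∈ PiNat.cylinder x s.length := by
    refine PiNat.mem_cylinder_iff.2 fun i hi => ?_
    exact (hy i hi).symm.trans (hx i hi)
  have := PiNat.mem_cylinder_iff_dist_le.1 hmem
  calc dist x y = @dist _ PiNat.dist y x := by
        rw [show (dist x y : ℝ) = @dist _ PiNat.dist x y from rfl, PiNat.dist_comm]
    _ ≤ (1/2 : ℝ) ^ s.length := this

lemma gaugeFn_le {f : ℝ → ℝ} (hf : IsGauge f) {d : ℝ≥0∞} {c : ℝ} (hc : 0 ≤ c)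
    (hd : d ≤ ENNReal.ofReal c) : gaugeFn f d ≤ ENNReal.ofReal (f c) := by
  have hdne : d ≠ ∞ := ne_top_of_le_ne_top ENNReal.ofReal_ne_top hd
  rw [gaugeFn, if_neg hdne]
  apply ENNReal.ofReal_le_ofReal
  exact hf.mono (mem_Ici.2 ENNReal.toReal_nonneg) (mem_Ici.2 hc)
    (ENNReal.toReal_le_of_le_ofReal hc hd)

end Stmt12Aux

/-- For every gauge function `f` there is an increasing `g ∈ ω^ω`
such that the Yorioka ideal `I_g` is contained in `N^f = {A ⊆ 2^ω : ℋ^f(A) = 0}`. -/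
theorem stmt12 (f : ℝ → ℝ) (hf : IsGauge f) :
    ∃ g : ℕ → ℕ, StrictMono g ∧
      Yorioka g ⊆ {A : Set (ℕ → Bool) | gaugeMeasure f A = 0} := by
  classical
  open Filter ENNReal Stmt12Aux in
  -- choose m n such that f x ≤ (1/2)^n for 0 < x ≤ (1/2)^(m n)
  have H : ∀ n : ℕ, ∃ m : ℕ, ∀ x : ℝ, 0 < x → x ≤ (1/2 : ℝ)^m → f x ≤ (1/2 : ℝ)^n := by
    intro n
    have hε : (0:ℝ) < (1/2)^n := by positivity
    obtain ⟨δ, hδ, hδ'⟩ := Metric.tendsto_nhdsWithin_nhds.1 hf.tendsto_zero _ hε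
    obtain ⟨m, hm⟩ : ∃ m : ℕ, (1/2 : ℝ)^m < δ := exists_pow_lt_of_lt_one hδ (by norm_num)
    refine ⟨m, fun x hx hx' => ?_⟩
    have := hδ' (mem_Ioi.2 hx) (by
      rw [Real.dist_eq, sub_zero, abs_of_pos hx]; exact lt_of_le_of_lt hx' hm)
    rw [Real.dist_eq, sub_zero, abs_of_nonneg (hf.nonneg x hx.le)] at this
    exact this.le
  choose m hm using H
  set g : ℕ → ℕ := fun n => Nat.rec (m 0) (fun k gk => max (gk + 1) (m (k + 1))) n with hg
  have hgsucc : ∀ n, g (n + 1) = max (g n + 1) (m (n + 1)) := fun n => rfl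
  have hgmono : StrictMono g := by
    apply strictMono_nat_of_lt_succ
    intro n
    rw [hgsucc]
    exact lt_of_lt_of_le (Nat.lt_succ_self _) (le_max_left _ _)
  have hmg : ∀ n, m n ≤ g n := by
    intro n
    cases n with
    | zero => exact le_refl _
    | succ k => rw [hgsucc]; exact le_max_right _ _
  refine ⟨g, hgmono, ?_⟩
  rintro A ⟨h, hfb, σ, hlen, hsub⟩
  -- key pointwise bound
  have hN1 : ∀ᶠ n in atTop, g n ≤ h n := by simpa using hfb 1
  obtain ⟨N₀, hN₀⟩ := eventually_atTop.1 hN1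
  -- diam and gauge bounds for n ≥ N₀
  have hdiam : ∀ n, n ≥ N₀ → EMetric.diam {x : ℕ → Bool | InitSeg (σ n) x} ≤ (2⁻¹ : ℝ≥0∞)^n := by
    intro n hn
    refine (diam_cyl (σ n)).trans ?_
    rw [ofReal_half_pow]
    have : n ≤ (σ n).length := by
      rw [hlen n]
      exact le_trans (hgmono.le_apply) (hN₀ n hn)
    exact pow_le_pow_of_le_one zero_le (by norm_num) this
  have hkey : ∀ n, n ≥ N₀ →
      gaugeFn f (EMetric.diam {x : ℕ → Bool | InitSeg (σ n) x}) ≤ (2⁻¹ : ℝ≥0∞)^n := by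
    intro n hn
    have h1 : (1/2 : ℝ)^(h n) ≤ (1/2 : ℝ)^(m n) :=
      pow_le_pow_of_le_one (by norm_num) (by norm_num) ((hmg n).trans (hN₀ n hn))
    have h2 : f ((1/2 : ℝ)^(h n)) ≤ (1/2 : ℝ)^n := hm n _ (by positivity) h1
    have h3 : gaugeFn f (EMetric.diam {x : ℕ → Bool | InitSeg (σ n) x})
        ≤ ENNReal.ofReal (f ((1/2 : ℝ)^(h n))) := by
      apply gaugeFn_le hf (by positivity)
      have := diam_cyl (σ n)
      rwa [hlen n] at this
    refine h3.trans ?_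
    rw [← ofReal_half_pow]
    exact ENNReal.ofReal_le_ofReal h2
  -- show measure zero
  refine le_antisymm ?_ zero_le
  have hpre : ∀ r : ℝ≥0∞, 0 < r →
      OuterMeasure.mkMetric'.pre (fun s => gaugeFn f (EMetric.diam s)) r A = 0 := by
    intro r hr
    obtain ⟨N₁, hN₁⟩ := ENNReal.exists_inv_two_pow_lt hr.ne'
    have hbound : ∀ N : ℕ, N ≥ max N₀ N₁ →
        OuterMeasure.mkMetric'.pre (fun s => gaugeFn f (EMetric.diam s)) r A
          ≤ (2⁻¹ : ℝ≥0∞)^N * 2 := by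
      intro N hN
      have hNN₀ : N₀ ≤ N := le_trans (le_max_left _ _) hN
      have hNN₁ : N₁ ≤ N := le_trans (le_max_right _ _) hN
      have hcov : A ⊆ ⋃ k : ℕ, {x : ℕ → Bool | InitSeg (σ (N + k)) x} := by
        intro x hx
        obtain ⟨n, hn, hseg⟩ := frequently_atTop.1 (hsub hx) N
        exact mem_iUnion.2 ⟨n - N, by simpa [Nat.add_sub_cancel' hn] using hseg⟩
      calc OuterMeasure.mkMetric'.pre (fun s => gaugeFn f (EMetric.diam s)) r A
          ≤ ∑' k : ℕ, OuterMeasure.mkMetric'.pre (fun s => gaugeFn f (EMetric.diam s)) r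
              {x : ℕ → Bool | InitSeg (σ (N + k)) x} :=
            le_trans (measure_mono hcov) (measure_iUnion_le _)
        _ ≤ ∑' k : ℕ, (2⁻¹ : ℝ≥0∞)^(N + k) := by
            apply ENNReal.tsum_le_tsum
            intro k
            have hdr : EMetric.diam {x : ℕ → Bool | InitSeg (σ (N + k)) x} ≤ r := by
              refine le_trans (hdiam (N + k) (le_trans hNN₀ (Nat.le_add_right _ _))) ?_
              refine le_trans ?_ hN₁.le
              exact pow_le_pow_of_le_one zero_le (by norm_num)
                (le_trans hNN₁ (Nat.le_add_right _ _))
            exact le_trans (OuterMeasure.mkMetric'.pre_le hdr)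
              (hkey (N + k) (le_trans hNN₀ (Nat.le_add_right _ _)))
        _ = (2⁻¹ : ℝ≥0∞)^N * 2 := by
            simp only [pow_add]
            rw [ENNReal.tsum_mul_left, ENNReal.tsum_geometric, ENNReal.one_sub_inv_two,
              inv_inv]
    have htend : Tendsto (fun N : ℕ => (2⁻¹ : ℝ≥0∞)^N * 2) atTop (nhds 0) := by
      have h0 : Tendsto (fun N : ℕ => (2⁻¹ : ℝ≥0∞)^N) atTop (nhds 0) :=
        ENNReal.tendsto_pow_atTop_nhds_zero_of_lt_one (by norm_num)
      simpa using ENNReal.Tendsto.mul_const h0 (Or.inr (by norm_num))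
    refine le_antisymm ?_ zero_le
    exact ge_of_tendsto htend (eventually_atTop.2 ⟨max N₀ N₁, hbound⟩)
  have hT := OuterMeasure.mkMetric'.tendsto_pre (fun s => gaugeFn f (EMetric.diam s)) A
  have hT0 : Tendsto
      (fun r => OuterMeasure.mkMetric'.pre (fun s => gaugeFn f (EMetric.diam s)) r A)
      (nhdsWithin 0 (Ioi 0)) (nhds 0) := by
    refine Tendsto.congr' ?_ tendsto_const_nhds
    filter_upwards [self_mem_nhdsWithin] with r hr
    exact (hpre r hr).symm
  have : gaugeMeasure f A = 0 := by
    have := tendsto_nhds_unique hT hT0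
    simpa [gaugeMeasure, OuterMeasure.mkMetric, EMetric.diam] using this
  exact this.le
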